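/- For every natural n ≥ 2, the unique solution γ of γ = tan(γ) in the interval ((n - 1/2)π - π/2, (n - 1/2)π) satisfies (n - 1/2)π - 1/(3(n - 1/2)) < γ < (n - 1/2)π - 1/(4(n - 1/2)). -/

import Mathlib

open Real Set

private lemma aux_h {x : ℝ} (hx0 : 0 < x) (hx1 : x < 1) : x * Real.cos x < Real.sin x := by
  have mono : StrictMonoOn (fun y => Real.sin y - y * Real.cos y) (Icc (0:ℝ) 1) := by
    apply strictMonoOn_of_deriv_pos (convex_Icc 0 1)
    · exact (Real.continuous_sin.sub (continuous_id.mul Real.continuous_cos)).continuousOn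
    · intro y hy
      rw [interior_Icc] at hy
      have hd : HasDerivAt (fun y => Real.sin y - y * Real.cos y) (y * Real.sin y) y := by
        have h := (Real.hasDerivAt_sin y).sub ((hasDerivAt_id y).mul (Real.hasDerivAt_cos y))
        refine h.congr_deriv ?_
        simp only [id_eq]
        ring
      rw [hd.deriv]
      exact mul_pos hy.1 (Real.sin_pos_of_pos_of_lt_pi hy.1
        (by linarith [Real.pi_gt_three, hy.2]))
  have h := mono (left_mem_Icc.mpr zero_le_one) ⟨hx0.le, hx1.le⟩ hx0
  simp at h
  linarith

private lemma aux_g {x : ℝ} (hx0 : 0 < x) (hx1 : x < 1) :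
    x * Real.cos x < (1 - x^2/3) * Real.sin x := by
  have mono : StrictMonoOn (fun y => (1 - y^2/3) * Real.sin y - y * Real.cos y) (Icc (0:ℝ) 1) := by
    apply strictMonoOn_of_deriv_pos (convex_Icc 0 1)
    · exact (((continuous_const.sub ((continuous_pow 2).div_const 3)).mul Real.continuous_sin).sub
        (continuous_id.mul Real.continuous_cos)).continuousOn
    · intro y hy
      rw [interior_Icc] at hy
      have hp : HasDerivAt (fun y : ℝ => y^2) (2*y) y := by
        simpa using hasDerivAt_pow 2 y
      have h2 : HasDerivAt (fun y : ℝ => 1 - y^2/3) (-(2*y/3)) y :=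
        (hp.div_const 3).const_sub 1
      have hd : HasDerivAt (fun y => (1 - y^2/3) * Real.sin y - y * Real.cos y)
          ((y/3) * (Real.sin y - y * Real.cos y)) y := by
        have h := (h2.mul (Real.hasDerivAt_sin y)).sub
          ((hasDerivAt_id y).mul (Real.hasDerivAt_cos y))
        refine h.congr_deriv ?_
        simp only [id_eq]
        ring
      rw [hd.deriv]
      exact mul_pos (by linarith [hy.1]) (by linarith [aux_h hy.1 hy.2])
  have h := mono (left_mem_Icc.mpr zero_le_one) ⟨hx0.le, hx1.le⟩ hx0
  simp at h
  linarith

private lemma aux_k {x : ℝ} (hx0 : 0 < x) (hx1 : x < 1) :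
    (1 - x^2) * Real.sin x < x * Real.cos x := by
  have mono : StrictMonoOn (fun y => y * Real.cos y + y^2 * Real.sin y - Real.sin y)
      (Icc (0:ℝ) 1) := by
    apply strictMonoOn_of_deriv_pos (convex_Icc 0 1)
    · exact (((continuous_id.mul Real.continuous_cos).add
        ((continuous_pow 2).mul Real.continuous_sin)).sub Real.continuous_sin).continuousOn
    · intro y hy
      rw [interior_Icc] at hy
      have hp : HasDerivAt (fun y : ℝ => y^2) (2*y) y := by
        simpa using hasDerivAt_pow 2 y
      have hd : HasDerivAt (fun y => y * Real.cos y + y^2 * Real.sin y - Real.sin y)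
          (y * Real.sin y + y^2 * Real.cos y) y := by
        have h := (((hasDerivAt_id y).mul (Real.hasDerivAt_cos y)).add
          (hp.mul (Real.hasDerivAt_sin y))).sub (Real.hasDerivAt_sin y)
        refine h.congr_deriv ?_
        simp only [id_eq]
        ring
      rw [hd.deriv]
      have hs : 0 < Real.sin y := Real.sin_pos_of_pos_of_lt_pi hy.1
        (by linarith [Real.pi_gt_three, hy.2])
      have hc : 0 < Real.cos y := Real.cos_pos_of_mem_Ioo
        ⟨by linarith [Real.pi_gt_three, hy.1], by linarith [Real.pi_gt_three, hy.2]⟩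
      exact add_pos (mul_pos hy.1 hs) (mul_pos (pow_pos hy.1 2) hc)
  have h := mono (left_mem_Icc.mpr zero_le_one) ⟨hx0.le, hx1.le⟩ hx0
  simp at h
  linarith

private lemma tan_shift (n : ℕ) (x : ℝ) :
    Real.tan ((n:ℝ)*π - π/2 - x) = (Real.tan x)⁻¹ := by
  have he : (n:ℝ)*π - π/2 - x = -(π/2 + x) + (n:ℝ)*π := by ring
  rw [he, Real.tan_periodic.nat_mul n (-(π/2 + x)), Real.tan_neg]
  have he2 : π/2 + x = π/2 - (-x) := by ring
  rw [he2, Real.tan_pi_div_two_sub, Real.tan_neg, inv_neg, neg_neg]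

private lemma cos_ne (n : ℕ) {γ : ℝ} (h1 : ((n:ℝ)-1/2)*π - π/2 < γ)
    (h2 : γ < ((n:ℝ)-1/2)*π) : Real.cos γ ≠ 0 := by
  intro h
  obtain ⟨k, hk⟩ := Real.cos_eq_zero_iff.mp h
  have hπ : 0 < π := Real.pi_pos
  rw [hk] at h1 h2
  have h1' : (2*(n:ℝ) - 2) < 2*(k:ℝ)+1 := by nlinarith
  have h2' : (2*(k:ℝ)+1) < 2*(n:ℝ) - 1 := by nlinarith
  have e1 : (2*(n:ℤ) - 2) < 2*k+1 := by exact_mod_cast h1'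
  have e2 : (2*k+1) < 2*(n:ℤ) - 1 := by exact_mod_cast h2'
  omega

private lemma sin_ne (n : ℕ) {γ : ℝ} (h1 : ((n:ℝ)-1/2)*π - π/2 < γ)
    (h2 : γ < ((n:ℝ)-1/2)*π) : Real.sin γ ≠ 0 := by
  intro h
  obtain ⟨k, hk⟩ := Real.sin_eq_zero_iff.mp h
  have hπ : 0 < π := Real.pi_pos
  rw [← hk] at h1 h2
  have h1' : ((n:ℝ) - 1) < (k:ℝ) := by nlinarith
  have h2' : (k:ℝ) < (n:ℝ) := by nlinarith
  have e1 : ((n:ℤ) - 1) < k := by exact_mod_cast h1'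
  have e2 : k < (n:ℤ) := by exact_mod_cast h2'
  omega

private lemma mono_f (n : ℕ) :
    StrictMonoOn (fun γ => Real.tan γ - γ)
      (Ioo (((n:ℝ)-1/2)*π - π/2) (((n:ℝ)-1/2)*π)) := by
  apply strictMonoOn_of_deriv_pos (convex_Ioo _ _)
  · intro γ hγ
    exact ((Real.continuousAt_tan.mpr (cos_ne n hγ.1 hγ.2)).sub continuousAt_id).continuousWithinAt
  · intro γ hγ
    rw [interior_Ioo] at hγ
    have hc := cos_ne n hγ.1 hγ.2
    have hs := sin_ne n hγ.1 hγ.2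
    have hd : HasDerivAt (fun γ => Real.tan γ - γ) (1/Real.cos γ^2 - 1) γ :=
      (Real.hasDerivAt_tan hc).sub (hasDerivAt_id γ)
    rw [hd.deriv]
    have h1 : Real.sin γ^2 + Real.cos γ^2 = 1 := Real.sin_sq_add_cos_sq γ
    have h2 : 0 < Real.cos γ^2 := by positivity
    have h3 : 0 < Real.sin γ^2 := by positivity
    rw [sub_pos, lt_div_iff₀ h2]
    nlinarith

set_option maxHeartbeats 1000000 in
theorem stmt_18 (n : ℕ) (hn : 2 ≤ n) :
    (∃! γ : ℝ, γ ∈ Set.Ioo (((n : ℝ) - 1/2)*π - π/2) (((n : ℝ) - 1/2)*π) ∧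
      Real.tan γ = γ) ∧
    (∀ γ ∈ Set.Ioo (((n : ℝ) - 1/2)*π - π/2) (((n : ℝ) - 1/2)*π),
      Real.tan γ = γ →
      ((n : ℝ) - 1/2)*π - 1/(3*((n : ℝ) - 1/2)) < γ ∧
      γ < ((n : ℝ) - 1/2)*π - 1/(4*((n : ℝ) - 1/2))) := by
  have hπ : (3.1415 : ℝ) < π := by
    have := Real.pi_gt_d6; norm_num at this ⊢; linarith
  have hπ4 : π ≤ 4 := Real.pi_le_four
  have hmono := mono_f n
  set b : ℝ := (n:ℝ) - 1/2 with hbdef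
  have hb : (3/2:ℝ) ≤ b := by
    have h2n : (2:ℝ) ≤ (n:ℝ) := by exact_mod_cast hn
    rw [hbdef]; linarith
  clear_value b
  have hbpos : (0:ℝ) < b := by linarith
  set x1 : ℝ := 1/(3*b) with hx1def
  set x2 : ℝ := 1/(4*b) with hx2def
  have hx1pos : 0 < x1 := by rw [hx1def]; positivity
  have hx2pos : 0 < x2 := by rw [hx2def]; positivity
  have hx1b : x1 * b = 1/3 := by rw [hx1def]; field_simp
  have hx2b : x2 * b = 1/4 := by rw [hx2def]; field_simp
  clear_value x1 x2
  have hx1lt : x1 ≤ 2/9 := by nlinarith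
  have hx2lt : x2 ≤ 1/6 := by nlinarith
  have hx1lt1 : x1 < 1 := by linarith
  have hx2lt1 : x2 < 1 := by linarith
  have hbπ : b*π = (n:ℝ)*π - π/2 := by rw [hbdef]; ring
  -- tan at shifted points
  have htan : ∀ x : ℝ, 0 < x → x < 1 → Real.tan (b*π - x) = Real.cos x / Real.sin x := by
    intro x h0 h1
    have hsx : 0 < Real.sin x := Real.sin_pos_of_pos_of_lt_pi h0 (by linarith)
    have heq : b*π - x = (n:ℝ)*π - π/2 - x := by rw [hbπ]
    rw [heq, tan_shift, Real.tan_eq_sin_div_cos, inv_div]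
  have hsin1 : 0 < Real.sin x1 := Real.sin_pos_of_pos_of_lt_pi hx1pos (by linarith)
  have hsin2 : 0 < Real.sin x2 := Real.sin_pos_of_pos_of_lt_pi hx2pos (by linarith)
  -- endpoint sign facts
  have hfc : Real.tan (b*π - x1) < b*π - x1 := by
    rw [htan x1 hx1pos hx1lt1, div_lt_iff₀ hsin1]
    have hg := aux_g hx1pos hx1lt1
    have hexp : x1*(b*π - x1) = π/3 - x1^2 := by
      have : x1*(b*π - x1) = (x1*b)*π - x1^2 := by ring
      rw [this, hx1b]; ring
    have hsq : x1 * x1 ≤ (2/9) * (2/9) :=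
      mul_le_mul hx1lt hx1lt hx1pos.le (by norm_num)
    have hkey : (1 - x1^2/3) ≤ x1 * (b*π - x1) := by
      rw [hexp]; nlinarith
    have h2 : (1 - x1^2/3) * Real.sin x1 ≤ (x1 * (b*π - x1)) * Real.sin x1 :=
      mul_le_mul_of_nonneg_right hkey hsin1.le
    have h3 : x1 * Real.cos x1 < x1 * ((b*π - x1) * Real.sin x1) := by nlinarith
    exact lt_of_mul_lt_mul_left h3 hx1pos.le
  have hfd : b*π - x2 < Real.tan (b*π - x2) := by
    rw [htan x2 hx2pos hx2lt1, lt_div_iff₀ hsin2]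
    have hk := aux_k hx2pos hx2lt1
    have hexp : x2*(b*π - x2) = π/4 - x2^2 := by
      have : x2*(b*π - x2) = (x2*b)*π - x2^2 := by ring
      rw [this, hx2b]; ring
    have hkey : x2 * (b*π - x2) ≤ (1 - x2^2) := by
      rw [hexp]; nlinarith
    have h2 : (x2 * (b*π - x2)) * Real.sin x2 ≤ (1 - x2^2) * Real.sin x2 :=
      mul_le_mul_of_nonneg_right hkey hsin2.le
    have h3 : x2 * ((b*π - x2) * Real.sin x2) < x2 * Real.cos x2 := by nlinarith
    exact lt_of_mul_lt_mul_left h3 hx2pos.le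
  have hcI : b*π - x1 ∈ Ioo (b*π - π/2) (b*π) := ⟨by linarith, by linarith⟩
  have hdI : b*π - x2 ∈ Ioo (b*π - π/2) (b*π) := ⟨by linarith, by linarith⟩
  have hcd : b*π - x1 < b*π - x2 := by
    have : x2 < x1 := by nlinarith
    linarith
  -- existence via IVT
  have hcont : ContinuousOn (fun γ => Real.tan γ - γ) (Icc (b*π - x1) (b*π - x2)) := by
    intro γ hγ
    have hγI : γ ∈ Ioo (b*π - π/2) (b*π) :=
      ⟨lt_of_lt_of_le hcI.1 hγ.1, lt_of_le_of_lt hγ.2 hdI.2⟩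
    have hcγ : Real.cos γ ≠ 0 := by
      rw [hbdef] at hγI
      exact cos_ne n hγI.1 hγI.2
    exact ((Real.continuousAt_tan.mpr hcγ).sub continuousAt_id).continuousWithinAt
  have hiv := intermediate_value_Ioo hcd.le hcont
  have h0mem : (0:ℝ) ∈ Ioo (Real.tan (b*π - x1) - (b*π - x1)) (Real.tan (b*π - x2) - (b*π - x2)) :=
    ⟨by linarith, by linarith⟩
  obtain ⟨γ₀, hγ₀cd, hγ₀eq⟩ := hiv h0mem
  have hγ₀I : γ₀ ∈ Ioo (b*π - π/2) (b*π) := ⟨lt_trans hcI.1 hγ₀cd.1, lt_trans hγ₀cd.2 hdI.2⟩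
  have hγ₀root : Real.tan γ₀ = γ₀ := by
    have h : Real.tan γ₀ - γ₀ = 0 := hγ₀eq
    linarith
  have hmono' : StrictMonoOn (fun γ => Real.tan γ - γ) (Ioo (b*π - π/2) (b*π)) := hmono
  constructor
  · refine ⟨γ₀, ⟨hγ₀I, hγ₀root⟩, ?_⟩
    intro y hy
    have hyI : y ∈ Ioo (b*π - π/2) (b*π) := hy.1
    have hfy : Real.tan y - y = 0 := by rw [hy.2]; ring
    have hfγ₀ : Real.tan γ₀ - γ₀ = 0 := by rw [hγ₀root]; ring
    exact hmono'.injOn hyI hγ₀I (by rw [hfy, hfγ₀])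
  · intro γ hγ hroot
    have hγI : γ ∈ Ioo (b*π - π/2) (b*π) := hγ
    have hfγ : Real.tan γ - γ = 0 := by rw [hroot]; ring
    have hgoal1 : b*π - x1 < γ := by
      by_contra hle
      push_neg at hle
      rcases eq_or_lt_of_le hle with heq | hlt
      · rw [← heq] at hfc; linarith
      · have h := hmono' hγI hcI hlt
        simp only at h
        linarith
    have hgoal2 : γ < b*π - x2 := by
      by_contra hle
      push_neg at hle
      rcases eq_or_lt_of_le hle with heq | hlt
      · rw [heq] at hfd; linarith
      · have h := hmono' hdI hγI hlt
        simp only at h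
        linarith
    exact ⟨hgoal1, hgoal2⟩
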